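/- arXiv:0704.1195 — 2 statements merged into one kernel-verified Lean document; each statement's English description precedes it below -/
import Mathlib

section
/- Let α ∈ ℂ with 0 < |α| < 1, s ≥ 1, and Q a polynomial of degree at most s with Q(0) = 0; set f(z,w) = (αz, w z^s + Q(z)) and C₁ = max{|Q(z)|/|z| : |z| ≤ 1} (well-defined since Q(0)=0). Then for every R₂ > 0 and every n ≥ 1, the n-th iterate satisfies f^n(P(1, R₂)) ⊆ P(|α|^n, |α|^{n(n-1)/2}(R₂ + C₁) + |α|^{n-1} C₁/(1 - |α|)), where P(r, r') = {(z,w) : |z| < r, |w| < r'}. -/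
theorem enoki_iterate_bidisc_estimate
    (α : ℂ) (hα0 : 0 < ‖α‖) (hα1 : ‖α‖ < 1)
    (s : ℕ) (hs : 1 ≤ s)
    (Q : Polynomial ℂ) (hQdeg : Q.natDegree ≤ s) (hQ0 : Q.eval 0 = 0)
    (C₁ : ℝ)
    (hC₁ : ∀ z : ℂ, ‖z‖ ≤ 1 →
      ‖Q.eval z‖ ≤ C₁ * ‖z‖)
    (f : ℂ × ℂ → ℂ × ℂ)
    (hf : ∀ z w : ℂ, f (z, w) = (α * z, w * z ^ s + Q.eval z))
    (P : ℝ → ℝ → Set (ℂ × ℂ))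
    (hP : ∀ r r' : ℝ, P r r' =
      {q : ℂ × ℂ | ‖q.1‖ < r ∧ ‖q.2‖ < r'})
    (R₂ : ℝ) (hR₂ : 0 < R₂) :
    ∀ n : ℕ, 1 ≤ n → ∀ q ∈ P 1 R₂,
      f^[n] q ∈ P ((‖α‖) ^ n)
        ((‖α‖) ^ (n * (n - 1) / 2) * (R₂ + C₁)
          + (‖α‖) ^ (n - 1) * C₁ / (1 - ‖α‖)) := by
  intro n hn q hq
  set a := ‖α‖ with ha_def
  have hd : 0 < 1 - a := by linarith
  have hC₁0 : 0 ≤ C₁ := by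
    have h := hC₁ 1 (by simp)
    simpa using (norm_nonneg (Q.eval 1)).trans h
  have hexp : ∀ m : ℕ, m + m * (m - 1) / 2 = (m + 1) * m / 2 := by
    intro m
    cases m with
    | zero => rfl
    | succ k =>
      simp only [Nat.add_sub_cancel]
      have h1 : (k + 1 + 1) * (k + 1) = (k + 1) * k + 2 * (k + 1) := by ring
      rw [h1, Nat.add_mul_div_left _ _ (by norm_num : 0 < 2)]
      omega
  have ha0 : (0:ℝ) < a := hα0
  -- strengthened claim
  have claim : ∀ m : ℕ, 1 ≤ m →
      ‖(f^[m] q).1‖ < a ^ m ∧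
      ‖(f^[m] q).2‖ <
        a ^ (m * (m - 1) / 2) * (R₂ + C₁) + C₁ * a ^ (m - 1) * (1 - a ^ (m - 1)) / (1 - a) := by
    intro m hm
    induction m, hm using Nat.le_induction with
    | base =>
      rw [hP] at hq
      obtain ⟨h1, h2⟩ := hq
      have hfq : f^[1] q = (α * q.1, q.2 * q.1 ^ s + Q.eval q.1) := by
        rw [Function.iterate_one]; exact hf q.1 q.2
      rw [hfq]
      constructor
      · simp only [norm_mul, pow_one]
        calc a * ‖q.1‖ < a * 1 := mul_lt_mul_of_pos_left h1 ha0
          _ = a := mul_one a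
      · norm_num
        have hb : ‖q.2 * q.1 ^ s + Q.eval q.1‖
            ≤ ‖q.2‖ * ‖q.1‖ ^ s + C₁ * ‖q.1‖ := by
          calc ‖q.2 * q.1 ^ s + Q.eval q.1‖
              ≤ ‖q.2 * q.1 ^ s‖ + ‖Q.eval q.1‖ :=
                norm_add_le _ _
            _ ≤ ‖q.2‖ * ‖q.1‖ ^ s + C₁ * ‖q.1‖ := by
                rw [norm_mul, norm_pow]
                exact add_le_add_right (hC₁ q.1 h1.le) _
        have h3 : ‖q.2‖ * ‖q.1‖ ^ s < R₂ := by
          have hle : ‖q.1‖ ^ s ≤ 1 := pow_le_one₀ (norm_nonneg _) h1.le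
          calc ‖q.2‖ * ‖q.1‖ ^ s ≤ ‖q.2‖ * 1 :=
                mul_le_mul_of_nonneg_left hle (norm_nonneg _)
            _ = ‖q.2‖ := mul_one _
            _ < R₂ := h2
        have h4 : C₁ * ‖q.1‖ ≤ C₁ := by
          calc C₁ * ‖q.1‖ ≤ C₁ * 1 := mul_le_mul_of_nonneg_left h1.le hC₁0
            _ = C₁ := mul_one _
        linarith
    | succ m hm ih =>
      obtain ⟨hz, hw⟩ := ih
      set p := f^[m] q with hp_def
      have hfp : f^[m + 1] q = (α * p.1, p.2 * p.1 ^ s + Q.eval p.1) := by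
        rw [Function.iterate_succ_apply']
        exact hf p.1 p.2
      rw [hfp]
      have han : (0:ℝ) < a ^ m := pow_pos ha0 m
      have han1 : a ^ m ≤ 1 := pow_le_one₀ ha0.le hα1.le
      have hz1 : ‖p.1‖ ≤ 1 := hz.le.trans han1
      set c : ℝ := a ^ (m * (m - 1) / 2) * (R₂ + C₁)
          + C₁ * a ^ (m - 1) * (1 - a ^ (m - 1)) / (1 - a) with hc_def
      have hc0 : 0 < c := by
        have t1 : 0 < a ^ (m * (m - 1) / 2) * (R₂ + C₁) :=
          mul_pos (pow_pos ha0 _) (by linarith)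
        have t2 : 0 ≤ C₁ * a ^ (m - 1) * (1 - a ^ (m - 1)) / (1 - a) := by
          apply div_nonneg _ hd.le
          have h5 : a ^ (m - 1) ≤ 1 := pow_le_one₀ ha0.le hα1.le
          have h6 : (0:ℝ) ≤ a ^ (m - 1) := (pow_pos ha0 _).le
          exact mul_nonneg (mul_nonneg hC₁0 h6) (by linarith)
        rw [hc_def]; linarith
      constructor
      · simp only [norm_mul, pow_succ]
        calc a * ‖p.1‖ < a * a ^ m := mul_lt_mul_of_pos_left hz ha0
          _ = a ^ m * a := mul_comm _ _
      · have hb : ‖p.2 * p.1 ^ s + Q.eval p.1‖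
            ≤ ‖p.2‖ * ‖p.1‖ ^ s + C₁ * ‖p.1‖ := by
          calc ‖p.2 * p.1 ^ s + Q.eval p.1‖
              ≤ ‖p.2 * p.1 ^ s‖ + ‖Q.eval p.1‖ :=
                norm_add_le _ _
            _ ≤ ‖p.2‖ * ‖p.1‖ ^ s + C₁ * ‖p.1‖ := by
                rw [norm_mul, norm_pow]
                exact add_le_add_right (hC₁ p.1 hz1) _
        have hps : ‖p.1‖ ^ s ≤ a ^ m := by
          calc ‖p.1‖ ^ s ≤ (a ^ m) ^ s :=
                pow_le_pow_left₀ (norm_nonneg _) hz.le s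
            _ = a ^ (m * s) := by rw [← pow_mul]
            _ ≤ a ^ m := pow_le_pow_of_le_one ha0.le hα1.le (Nat.le_mul_of_pos_right m hs)
        have h3 : ‖p.2‖ * ‖p.1‖ ^ s < c * a ^ m := by
          calc ‖p.2‖ * ‖p.1‖ ^ s
              ≤ ‖p.2‖ * a ^ m :=
                mul_le_mul_of_nonneg_left hps (norm_nonneg _)
            _ < c * a ^ m := mul_lt_mul_of_pos_right hw han
        have h4 : C₁ * ‖p.1‖ ≤ C₁ * a ^ m :=
          mul_le_mul_of_nonneg_left hz.le hC₁0
        have hm1 : m - 1 + 1 = m := Nat.succ_pred_eq_of_pos hm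
        have hstep : c * a ^ m + C₁ * a ^ m ≤
            a ^ ((m + 1) * m / 2) * (R₂ + C₁)
              + C₁ * a ^ m * (1 - a ^ m) / (1 - a) := by
          have e1 : a ^ ((m + 1) * m / 2) = a ^ (m * (m - 1) / 2) * a ^ m := by
            rw [← pow_add, ← hexp m, Nat.add_comm]
          set b : ℝ := a ^ (m - 1) with hb_def
          have hb0 : (0:ℝ) < b := pow_pos ha0 _
          have hbm : a ^ m = b * a := by rw [hb_def, ← pow_succ, hm1]
          have hb1 : b ≤ 1 := pow_le_one₀ ha0.le hα1.le
          have key : (1 - b) * (b - a) ≤ 0 := by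
            rcases Nat.eq_zero_or_pos (m - 1) with h | h
            · rw [hb_def, h, pow_zero]; simp
            · have hba : b ≤ a := by
                calc b = a ^ (m - 1) := rfl
                  _ ≤ a ^ 1 := pow_le_pow_of_le_one ha0.le hα1.le h
                  _ = a := pow_one a
              nlinarith
          have prod : C₁ * b * a * ((1 - b) * (b - a)) ≤ 0 :=
            mul_nonpos_of_nonneg_of_nonpos (by positivity) key
          have num : a ^ m * (C₁ * b * (1 - b)) + C₁ * a ^ m * (1 - a)
              ≤ C₁ * a ^ m * (1 - a ^ m) := by
            rw [hbm]; nlinarith [prod]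
          have tail : a ^ m * (C₁ * b * (1 - b) / (1 - a)) + C₁ * a ^ m
              ≤ C₁ * a ^ m * (1 - a ^ m) / (1 - a) := by
            have lhs_eq : a ^ m * (C₁ * b * (1 - b) / (1 - a)) + C₁ * a ^ m
                = (a ^ m * (C₁ * b * (1 - b)) + C₁ * a ^ m * (1 - a)) / (1 - a) := by
              field_simp
            rw [lhs_eq]
            exact div_le_div_of_nonneg_right num hd.le
          calc c * a ^ m + C₁ * a ^ m
              = a ^ (m * (m - 1) / 2) * a ^ m * (R₂ + C₁)
                + (a ^ m * (C₁ * a ^ (m - 1) * (1 - a ^ (m - 1)) / (1 - a)) + C₁ * a ^ m) := by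
                rw [hc_def]; ring
            _ ≤ a ^ ((m + 1) * m / 2) * (R₂ + C₁)
                + C₁ * a ^ m * (1 - a ^ m) / (1 - a) := by
                rw [e1]; exact add_le_add le_rfl tail
        simp only [Nat.add_sub_cancel]
        calc ‖p.2 * p.1 ^ s + Q.eval p.1‖
            ≤ ‖p.2‖ * ‖p.1‖ ^ s + C₁ * ‖p.1‖ := hb
          _ < c * a ^ m + C₁ * a ^ m := by linarith
          _ ≤ _ := hstep
  rw [hP]
  obtain ⟨h1, h2⟩ := claim n hn
  refine ⟨h1, lt_of_lt_of_le h2 ?_⟩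
  refine add_le_add le_rfl ?_
  apply div_le_div_of_nonneg_right ?_ hd.le
  have h5 : (0:ℝ) < a ^ (n - 1) := pow_pos ha0 _
  nlinarith [mul_nonneg (mul_nonneg hC₁0 h5.le) h5.le]
end

section
/- Let p ≥ 2, ε > 0, and let μ be a finite positive Borel measure on the interval (0,1) such that for all 0 < a < b < 1 and all sufficiently large n ∈ ℕ: μ((a,b]) ≤ p^{-n} (b/a)^{2pⁿ} ε. Then for all 0 < r₁ < r₂ < 1 with r₂/r₁ ≤ e, we have μ((r₁, r₂]) ≤ 2·(r₂/r₁)·ε. -/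
open MeasureTheory Set Real

theorem division_argument_measure_bound
    (p : ℕ) (hp : 2 ≤ p) (ε : ℝ) (hε : 0 < ε)
    (μ : MeasureTheory.Measure ℝ) [MeasureTheory.IsFiniteMeasure μ]
    (hμ : ∃ N : ℕ, ∀ n ≥ N, ∀ a b : ℝ, 0 < a → a < b → b < 1 →
        μ (Set.Ioc a b) ≤
          ENNReal.ofReal ((1 / (p : ℝ) ^ n) * (b / a) ^ (2 * p ^ n) * ε)) :
    ∀ r₁ r₂ : ℝ, 0 < r₁ → r₁ < r₂ → r₂ < 1 → r₂ / r₁ ≤ Real.exp 1 →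
      μ (Set.Ioc r₁ r₂) ≤ ENNReal.ofReal (2 * (r₂ / r₁) * ε) := by
  obtain ⟨N, hN⟩ := hμ
  intro r₁ r₂ hr₁ hr12 hr₂ _
  set n := N with hn
  set m : ℕ := 2 * p ^ n with hm
  have hp0 : (0:ℝ) < (p:ℝ) := by positivity
  have hppos : (0:ℝ) < (p:ℝ) ^ n := by positivity
  have hmpos : 0 < m := by
    have : 0 < p ^ n := pow_pos (by omega) n
    omega
  have hmR : (0:ℝ) < (m:ℝ) := by exact_mod_cast hmpos
  set q : ℝ := r₂ / r₁ with hq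
  have hq1 : 1 < q := (one_lt_div hr₁).2 hr12
  have hq0 : 0 < q := lt_trans one_pos hq1
  set x : ℕ → ℝ := fun i => r₁ * q ^ ((i : ℝ) / m) with hx
  have hxpos : ∀ i, 0 < x i := fun i => mul_pos hr₁ (rpow_pos_of_pos hq0 _)
  have hxlt : ∀ i, x i < x (i+1) := by
    intro i
    apply mul_lt_mul_of_pos_left _ hr₁
    apply rpow_lt_rpow_of_exponent_lt hq1
    have h : (i:ℝ) < ((i+1:ℕ):ℝ) := by push_cast; linarith
    exact (div_lt_div_iff_of_pos_right hmR).2 h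
  have hmono : Monotone x := monotone_nat_of_le_succ (fun i => (hxlt i).le)
  have hx0 : x 0 = r₁ := by
    simp [hx]
  have hxm : x m = r₂ := by
    have : ((m:ℝ)) / (m:ℝ) = 1 := div_self (ne_of_gt hmR)
    simp [hx, this, rpow_one]
    rw [hq, mul_div_assoc', mul_comm, mul_div_assoc, div_self (ne_of_gt hr₁), mul_one]
  -- ratio of consecutive points
  have hratio : ∀ i, x (i+1) / x i = q ^ ((1:ℝ) / m) := by
    intro i
    have h1 : x (i+1) / x i = q ^ (((i:ℝ)+1) / m) / q ^ ((i:ℝ) / m) := by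
      rw [hx]
      push_cast
      rw [mul_div_mul_left _ _ (ne_of_gt hr₁)]
    rw [h1, ← rpow_sub hq0]
    congr 1
    field_simp
    ring
  -- each subinterval bound
  have hkey : ∀ i, i < m → μ (Set.Ioc (x i) (x (i+1))) ≤
      ENNReal.ofReal ((1 / (p : ℝ) ^ n) * q * ε) := by
    intro i hi
    have hlt1 : x (i+1) < 1 := by
      have : x (i+1) ≤ x m := hmono (by omega)
      linarith [hxm ▸ this]
    have := hN n le_rfl (x i) (x (i+1)) (hxpos i) (hxlt i) hlt1
    have hpow : (x (i+1) / x i) ^ (2 * p ^ n) = q := by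
      rw [hratio i, ← hm, ← rpow_natCast _ m, ← rpow_mul hq0.le]
      rw [one_div_mul_cancel (ne_of_gt hmR), rpow_one]
    rwa [hpow] at this
  -- subadditivity over the partition
  have hsub : ∀ k : ℕ, μ (Set.Ioc (x 0) (x k)) ≤
      ∑ i ∈ Finset.range k, μ (Set.Ioc (x i) (x (i+1))) := by
    intro k
    induction k with
    | zero => simp
    | succ k ih =>
      have hcover : Set.Ioc (x 0) (x (k+1)) = Set.Ioc (x 0) (x k) ∪ Set.Ioc (x k) (x (k+1)) := by
        rw [Set.Ioc_union_Ioc_eq_Ioc (hmono (Nat.zero_le k)) (hxlt k).le]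
      rw [hcover, Finset.sum_range_succ]
      exact le_trans (measure_union_le _ _) (add_le_add ih le_rfl)
  have h1 : μ (Set.Ioc r₁ r₂) ≤ (m:ℕ) • ENNReal.ofReal ((1 / (p : ℝ) ^ n) * q * ε) := by
    calc μ (Set.Ioc r₁ r₂) = μ (Set.Ioc (x 0) (x m)) := by rw [hx0, hxm]
    _ ≤ ∑ i ∈ Finset.range m, μ (Set.Ioc (x i) (x (i+1))) := hsub m
    _ ≤ ∑ i ∈ Finset.range m, ENNReal.ofReal ((1 / (p : ℝ) ^ n) * q * ε) := by
        apply Finset.sum_le_sum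
        intro i hi
        exact hkey i (Finset.mem_range.mp hi)
    _ = (m:ℕ) • ENNReal.ofReal ((1 / (p : ℝ) ^ n) * q * ε) := by
        rw [Finset.sum_const, Finset.card_range]
  calc μ (Set.Ioc r₁ r₂) ≤ (m:ℕ) • ENNReal.ofReal ((1 / (p : ℝ) ^ n) * q * ε) := h1
  _ = ENNReal.ofReal ((m:ℝ) * ((1 / (p : ℝ) ^ n) * q * ε)) := by
      rw [nsmul_eq_mul, ← ENNReal.ofReal_natCast, ← ENNReal.ofReal_mul (by positivity)]
  _ = ENNReal.ofReal (2 * (r₂ / r₁) * ε) := by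
      congr 1
      have hmcast : (m:ℝ) = 2 * (p:ℝ) ^ n := by rw [hm]; push_cast; ring
      rw [hmcast, ← hq]
      field_simp
end
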